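/- Fix an N×N Hermitian matrix h and a real number ε₂ ≠ 0. For almost every K = (K_{jk})_{1 ≤ j ≤ k ≤ N} ∈ ℝ^{N(N+1)/2} with respect to the product of standard Gaussian measures (equivalently, Lebesgue-almost every K), the spectrum of the 2^N × 2^N Hermitian matrix H_SYK2 + ε₂ H_d has non-degenerate gaps, where H_SYK2 := Σ_{j,k} h_{jk} a_j† a_k and H_d := Σ_{1 ≤ j ≤ k ≤ N} K_{jk} a_j†a_j a_k†a_k. -/

import Mathlib

open MeasureTheory ProbabilityTheory Matrix Finset
open scoped Matrix ComplexOrder Classical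

noncomputable section

/-- The Hilbert space basis of `N` qubits is indexed by `Fin N → Bool`. -/
abbrev QOp (N : ℕ) := Matrix (Fin N → Bool) (Fin N → Bool) ℂ

/-- Jordan–Wigner annihilation operator `a_j = Z^{⊗(j-1)} ⊗ |0⟩⟨1| ⊗ I`. -/
def aOp (N : ℕ) (j : Fin N) : QOp N := fun x y =>
  if x j = false ∧ y j = true ∧ ∀ i, i ≠ j → x i = y i then
    ∏ i ∈ Finset.univ.filter (fun i => i < j), (if y i then (-1 : ℂ) else 1)
  else 0

/-- The vacuum state `|0…0⟩`. -/
def vac (N : ℕ) : (Fin N → Bool) → ℂ := fun x => if x = fun _ => false then 1 else 0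

/-- `|φ_n⟩ = a_1† a_2† ⋯ a_n† |0⟩`. -/
def phiState (N n : ℕ) : (Fin N → Bool) → ℂ :=
  ((((List.finRange N).filter (fun j => decide (j.val < n))).map
    (fun j => (aOp N j)ᴴ)).prod) *ᵥ vac N

/-- Rank-one projector `|v⟩⟨v|`. -/
def outer (N : ℕ) (v : (Fin N → Bool) → ℂ) : QOp N := Matrix.vecMulVec v (star v)

/-- `H_SYK2 = Σ_{j,k} h_{jk} a_j† a_k`. -/
def HSYK2 (N : ℕ) (h : Matrix (Fin N) (Fin N) ℂ) : QOp N :=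
  ∑ j, ∑ k, h j k • ((aOp N j)ᴴ * aOp N k)

instance matrixMeasurableSpace {m n α : Type*} [MeasurableSpace α] :
    MeasurableSpace (Matrix m n α) := MeasurableSpace.pi

/-- The GUE measure on `N × N` complex matrices. -/
def gueMeasure (N : ℕ) : Measure (Matrix (Fin N) (Fin N) ℂ) :=
  Measure.map
    (fun p : (Fin N → ℝ) × (Fin N → Fin N → ℝ) × (Fin N → Fin N → ℝ) =>
      Matrix.of fun j k =>
        if j = k then (p.1 j : ℂ)
        else if j < k then (p.2.1 j k : ℂ) + (p.2.2 j k : ℂ) * Complex.I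
        else (p.2.1 k j : ℂ) - (p.2.2 k j : ℂ) * Complex.I)
    ((Measure.pi fun _ => gaussianReal 0 1).prod
      ((Measure.pi fun _ => Measure.pi fun _ => gaussianReal 0 (1/2)).prod
        (Measure.pi fun _ => Measure.pi fun _ => gaussianReal 0 (1/2))))

/-- Von Neumann entropy `S(ρ) = -tr(ρ ln ρ)` via eigenvalues (0 for non-Hermitian junk). -/
def vnEntropy {m : Type*} [Fintype m] [DecidableEq m] (ρ : Matrix m m ℂ) : ℝ :=
  if hρ : ρ.IsHermitian then -∑ i, hρ.eigenvalues i * Real.log (hρ.eigenvalues i) else 0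

/-- Rényi-2 entropy `S₂(ρ) = -ln tr(ρ²)`. -/
def renyi2 {m : Type*} [Fintype m] (ρ : Matrix m m ℂ) : ℝ := -Real.log ((ρ * ρ).trace.re)

/-- Rényi-α entropy. -/
def renyiEntropy {m : Type*} [Fintype m] [DecidableEq m] (α : ℝ) (ρ : Matrix m m ℂ) : ℝ :=
  if hρ : ρ.IsHermitian then
    if α = 1 then -∑ i, hρ.eigenvalues i * Real.log (hρ.eigenvalues i)
    else (1 - α)⁻¹ * Real.log (∑ i, hρ.eigenvalues i ^ α)
  else 0

/-- Binary entropy function. -/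
def binEntropy (x : ℝ) : ℝ := -x * Real.log x - (1 - x) * Real.log (1 - x)

/-- All eigenvalues (roots of the characteristic polynomial, with multiplicity) are distinct. -/
def NondegSpectrum {m : Type*} [Fintype m] [DecidableEq m] (M : Matrix m m ℂ) : Prop :=
  M.charpoly.roots.Nodup

/-- The spectrum has non-degenerate gaps. -/
def NondegGaps {m : Type*} [Fintype m] [DecidableEq m] (M : Matrix m m ℂ) : Prop :=
  M.charpoly.roots.Nodup ∧
  ∀ a ∈ M.charpoly.roots, ∀ b ∈ M.charpoly.roots, ∀ c ∈ M.charpoly.roots,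
    ∀ d ∈ M.charpoly.roots, a ≠ b → c ≠ d → a - b = c - d → a = c ∧ b = d

/-- The Jordan–Wigner image on modes `A` of the matrix unit `|y⟩⟨x|` of an `L`-mode system:
`(∏_{k : y_k = 1, increasing} a_{i_k}†) (∏_k a_{i_k} a_{i_k}†) (∏_{k : x_k = 1, decreasing} a_{i_k})`
where `i_1 < ⋯ < i_L` enumerates `A`. -/
def hatUnit (N L : ℕ) (ι : Fin L → Fin N) (y x : Fin L → Bool) : QOp N :=
  ((((List.finRange L).filter (fun k => y k)).map (fun k => (aOp N (ι k))ᴴ)).prod) *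
  (((List.finRange L).map (fun k => aOp N (ι k) * (aOp N (ι k))ᴴ)).prod) *
  (((((List.finRange L).filter (fun k => x k)).map (fun k => aOp N (ι k))).reverse).prod)

/-- The fermionic reduced density matrix of `ρ` on the set `A` of `L` modes, i.e. the unique
`2^L × 2^L` matrix with `tr(ρ_A X) = tr(ρ X̂)` for all polynomials `X` in the `L`-mode
creation/annihilation operators, `X̂` being the corresponding polynomial in `{a_j, a_j†}_{j ∈ A}`
(modes taken in increasing order). -/
def fermRDM (N L : ℕ) (A : Finset (Fin N)) (hA : A.card = L) (ρ : QOp N) :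
    Matrix (Fin L → Bool) (Fin L → Bool) ℂ :=
  fun x y => (ρ * hatUnit N L (fun k => A.orderEmbOfFin hA k) y x).trace

/-- Time evolution `e^{-iHt} v`. -/
def evolve (N : ℕ) (H : QOp N) (t : ℝ) (v : (Fin N → Bool) → ℂ) : (Fin N → Bool) → ℂ :=
  NormedSpace.exp ((-(t : ℂ) * Complex.I) • H) *ᵥ v

/-- Qubit partial trace onto the qubits in `A`. -/
def ptrace {N : ℕ} (A : Finset (Fin N)) (ρ : QOp N) :
    Matrix ({i // i ∈ A} → Bool) ({i // i ∈ A} → Bool) ℂ :=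
  fun x y => ∑ z : {i : Fin N // i ∉ A} → Bool,
    ρ (fun i => if h : i ∈ A then x ⟨i, h⟩ else z ⟨i, h⟩)
      (fun i => if h : i ∈ A then y ⟨i, h⟩ else z ⟨i, h⟩)


/-- Random density-density interaction `H_d = Σ_{j ≤ k} K_{jk} a_j†a_j a_k†a_k`. -/
def Hd (N : ℕ) (K : {pq : Fin N × Fin N // pq.1 ≤ pq.2} → ℝ) : QOp N :=
  ∑ pq : {pq : Fin N × Fin N // pq.1 ≤ pq.2},
    (K pq : ℂ) • ((aOp N pq.1.1)ᴴ * aOp N pq.1.1 * ((aOp N pq.1.2)ᴴ * aOp N pq.1.2))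


----------------------------------------------------------------
-- Auxiliary developments
----------------------------------------------------------------
section AuxMatrix
open Polynomial
open scoped Kronecker


variable {ι : Type*} [Fintype ι] [DecidableEq ι] {R S : Type*} [CommRing R] [CommRing S]

/-- `M ⊗ 1 - 1 ⊗ M`, whose eigenvalues are differences of eigenvalues of `M`. -/
def neg2 (M : Matrix ι ι R) : Matrix (ι × ι) (ι × ι) R :=
  M ⊗ₖ (1 : Matrix ι ι R) - (1 : Matrix ι ι R) ⊗ₖ M

lemma neg2_map (M : Matrix ι ι R) (f : R →+* S) : (neg2 M).map f = neg2 (M.map f) := by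
  ext ⟨i, j⟩ ⟨k, l⟩
  simp [neg2, Matrix.sub_apply, Matrix.map_apply, kroneckerMap_apply, Matrix.one_apply,
    apply_ite f, _root_.map_mul, map_sub]

lemma neg2_conj {U V : Matrix ι ι R} (hUV : U * V = 1) (M : Matrix ι ι R) :
    neg2 (U * M * V) = (U ⊗ₖ U) * neg2 M * (V ⊗ₖ V) := by
  have h1 : (1 : Matrix ι ι R) = U * 1 * V := by rw [Matrix.mul_one, hUV]
  rw [neg2, neg2, Matrix.mul_sub, Matrix.sub_mul, ← Matrix.mul_kronecker_mul,
    ← Matrix.mul_kronecker_mul, ← Matrix.mul_kronecker_mul, ← Matrix.mul_kronecker_mul, ← h1]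

lemma kron_mul_kron_one {U V : Matrix ι ι R} (hUV : U * V = 1) :
    (U ⊗ₖ U) * (V ⊗ₖ V) = (1 : Matrix (ι × ι) (ι × ι) R) := by
  rw [← Matrix.mul_kronecker_mul, hUV, Matrix.one_kronecker_one]

lemma neg2_diagonal (d : ι → R) :
    neg2 (diagonal d) = diagonal (fun p : ι × ι => d p.1 - d p.2) := by
  rw [neg2, ← Matrix.diagonal_one, Matrix.diagonal_kronecker_diagonal,
    Matrix.diagonal_kronecker_diagonal]
  ext ⟨i, j⟩ ⟨k, l⟩
  by_cases hik : i = k <;> by_cases hjl : j = l <;>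
    simp [Matrix.sub_apply, Matrix.diagonal_apply, Prod.ext_iff, hik, hjl]

lemma charpoly_conj {U V M : Matrix ι ι R} (hUV : U * V = 1) :
    (U * M * V).charpoly = M.charpoly := by
  have hmap : ∀ A B : Matrix ι ι R, (A * B).map (C : R →+* R[X]) = A.map C * B.map C :=
    fun A B => Matrix.map_mul
  have hone : (1 : Matrix ι ι R).map (C : R →+* R[X]) = 1 :=
    Matrix.map_one _ (map_zero C) (map_one C)
  have h1 : charmatrix (U * M * V) = (U.map C) * charmatrix M * (V.map C) := by
    rw [charmatrix, charmatrix]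
    simp only [RingHom.mapMatrix_apply]
    rw [Matrix.mul_sub, Matrix.sub_mul, hmap, hmap]
    congr 1
    have hc : U.map (C : R →+* R[X]) * Matrix.scalar ι (X : R[X]) = Matrix.scalar ι X * U.map C :=
      (Matrix.scalar_commute (X : R[X]) (fun r => Commute.all _ _) (U.map C)).symm
    calc Matrix.scalar ι (X : R[X]) = Matrix.scalar ι X * ((U * V).map C) := by
          rw [hUV, hone, Matrix.mul_one]
      _ = Matrix.scalar ι X * (U.map C * V.map C) := by rw [hmap]
      _ = U.map C * Matrix.scalar ι X * V.map C := by rw [← Matrix.mul_assoc, hc]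
  rw [Matrix.charpoly, Matrix.charpoly, h1, Matrix.det_mul, Matrix.det_mul]
  have : (U.map (C : R →+* R[X])).det * (V.map C).det = 1 := by
    rw [← Matrix.det_mul, ← hmap, hUV, hone, Matrix.det_one]
  calc (U.map (C : R →+* R[X])).det * (charmatrix M).det * (V.map C).det
      = (charmatrix M).det * ((U.map C).det * (V.map C).det) := by ring
    _ = (charmatrix M).det := by rw [this, mul_one]

lemma charpoly_diagonal (d : ι → R) :
    (diagonal d).charpoly = ∏ i, (X - C (d i)) := by
  have h : charmatrix (diagonal d) = diagonal (fun i => (X : R[X]) - C (d i)) := by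
    ext i j
    by_cases hij : i = j
    · subst hij; simp [charmatrix_apply_eq]
    · simp [charmatrix_apply_ne _ _ _ hij, Matrix.diagonal_apply_ne _ hij]
  rw [Matrix.charpoly, h, Matrix.det_diagonal]

/-- The 4-fold difference matrix. -/
def G4 (M : Matrix ι ι R) : Matrix ((ι × ι) × (ι × ι)) ((ι × ι) × (ι × ι)) R := neg2 (neg2 M)

lemma G4_map (M : Matrix ι ι R) (f : R →+* S) : (G4 M).map f = G4 (M.map f) := by
  rw [G4, neg2_map, neg2_map]; rfl

lemma charpoly_G4 {U V M : Matrix ι ι R} (E : ι → R) (hUV : U * V = 1)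
    (hM : M = U * diagonal E * V) :
    (G4 M).charpoly = ∏ q : (ι × ι) × (ι × ι), (X - C ((E q.1.1 - E q.1.2) - (E q.2.1 - E q.2.2))) := by
  have h2 : neg2 M = (U ⊗ₖ U) * neg2 (diagonal E) * (V ⊗ₖ V) := by rw [hM, neg2_conj hUV]
  have h4 : G4 M = ((U ⊗ₖ U) ⊗ₖ (U ⊗ₖ U)) * neg2 (neg2 (diagonal E)) *
      ((V ⊗ₖ V) ⊗ₖ (V ⊗ₖ V)) := by
    rw [G4, h2, neg2_conj (kron_mul_kron_one hUV)]
  rw [h4, charpoly_conj (kron_mul_kron_one (kron_mul_kron_one hUV)), neg2_diagonal,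
    neg2_diagonal, _root_.charpoly_diagonal]

end AuxMatrix

section AuxChar
open Polynomial
open scoped Kronecker



/-- The non-degenerate-gaps condition expressed on an eigenvalue listing. -/
def GoodE {β : Type*} (E : β → ℝ) : Prop :=
  ∀ a b c d : β, E a - E b - (E c - E d) = 0 → (a = b ∧ c = d) ∨ (a = c ∧ b = d)

variable {β : Type*} [Fintype β] [DecidableEq β]

def Ttriv (β : Type*) [Fintype β] [DecidableEq β] : Finset ((β × β) × (β × β)) :=
  univ.filter (fun q => (q.1.1 = q.1.2 ∧ q.2.1 = q.2.2) ∨ (q.1.1 = q.2.1 ∧ q.1.2 = q.2.2))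

lemma card_Ttriv : (Ttriv β).card = 2 * (Fintype.card β) ^ 2 - Fintype.card β := by
  classical
  set D := Fintype.card β
  have h1 : (univ.filter (fun q : (β × β) × (β × β) => q.1.1 = q.1.2 ∧ q.2.1 = q.2.2)) =
      Finset.image (fun ac : β × β => ((ac.1, ac.1), (ac.2, ac.2))) univ := by
    ext ⟨⟨a, b⟩, ⟨c, d⟩⟩
    simp only [mem_filter, mem_univ, true_and, Finset.mem_image, Prod.mk.injEq, Prod.ext_iff]
    aesop
  have h2 : (univ.filter (fun q : (β × β) × (β × β) => q.1.1 = q.2.1 ∧ q.1.2 = q.2.2)) =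
      Finset.image (fun p : β × β => (p, p)) univ := by
    ext ⟨⟨a, b⟩, ⟨c, d⟩⟩
    simp only [mem_filter, mem_univ, true_and, Finset.mem_image, Prod.mk.injEq, Prod.ext_iff]
    aesop
  have h3 : (univ.filter (fun q : (β × β) × (β × β) =>
      (q.1.1 = q.1.2 ∧ q.2.1 = q.2.2) ∧ (q.1.1 = q.2.1 ∧ q.1.2 = q.2.2))) =
      Finset.image (fun a : β => ((a, a), (a, a))) univ := by
    ext ⟨⟨a, b⟩, ⟨c, d⟩⟩
    simp only [mem_filter, mem_univ, true_and, Finset.mem_image, Prod.mk.injEq, Prod.ext_iff]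
    aesop
  have hinj1 : Function.Injective (fun ac : β × β => ((ac.1, ac.1), (ac.2, ac.2))) := by
    intro ⟨a, c⟩ ⟨a', c'⟩ h; simpa [Prod.ext_iff] using h
  have hinj2 : Function.Injective (fun p : β × β => (p, p)) := by
    intro p q h; simpa [Prod.ext_iff] using h
  have hinj3 : Function.Injective (fun a : β => ((a, a), (a, a))) := by
    intro a b h; simpa [Prod.ext_iff] using h
  have hcard : (Ttriv β).card + D = D ^ 2 + D ^ 2 := by
    have := Finset.card_union_add_card_inter
      (univ.filter (fun q : (β × β) × (β × β) => q.1.1 = q.1.2 ∧ q.2.1 = q.2.2))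
      (univ.filter (fun q : (β × β) × (β × β) => q.1.1 = q.2.1 ∧ q.1.2 = q.2.2))
    rw [← Finset.filter_or, ← Finset.filter_and] at this
    rw [h1, h2, h3, Finset.card_image_of_injective _ hinj1,
      Finset.card_image_of_injective _ hinj2, Finset.card_image_of_injective _ hinj3,
      Finset.card_univ, Finset.card_univ, Fintype.card_prod] at this
    rw [Ttriv]
    simp only [D, sq]
    omega
  omega

lemma roots_of_diag {M U V : Matrix β β ℂ} {E : β → ℝ}
    (hUV : U * V = 1) (hM : M = U * diagonal (fun a => (E a : ℂ)) * V) :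
    M.charpoly.roots = Multiset.map (fun a => (E a : ℂ)) univ.val := by
  rw [hM, charpoly_conj hUV, _root_.charpoly_diagonal]
  rw [Finset.prod_eq_multiset_prod]
  have := roots_multiset_prod_X_sub_C (Multiset.map (fun a => (E a : ℂ)) univ.val)
  rw [Multiset.map_map] at this
  simpa [Function.comp] using this

lemma nondegGaps_iff_goodE {M U V : Matrix β β ℂ} {E : β → ℝ}
    (hUV : U * V = 1) (hM : M = U * diagonal (fun a => (E a : ℂ)) * V) :
    NondegGaps M ↔ GoodE E := by
  have hroots := roots_of_diag hUV hM
  constructor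
  · rintro ⟨hnd, hgap⟩
    rw [hroots] at hnd hgap
    have hinj : Function.Injective E := by
      intro a b hab
      exact Multiset.inj_on_of_nodup_map hnd a (Finset.mem_univ_val a) b (Finset.mem_univ_val b)
        (by exact_mod_cast congrArg Complex.ofReal hab)
    intro a b c d h0
    by_cases hab : a = b
    · subst hab
      have : E c = E d := by linarith
      exact Or.inl ⟨rfl, hinj this⟩
    · have hEab : E a ≠ E b := fun hcon => hab (hinj hcon)
      have hcd : c ≠ d := by
        intro hcon; subst hcon
        exact hEab (by linarith)
      have hEcd : E c ≠ E d := fun hcon => hcd (hinj hcon)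
      have hmem : ∀ x : β, (E x : ℂ) ∈ Multiset.map (fun a => (E a : ℂ)) univ.val :=
        fun x => Multiset.mem_map_of_mem _ (Finset.mem_univ_val x)
      have := hgap _ (hmem a) _ (hmem b) _ (hmem c) _ (hmem d)
        (by exact_mod_cast hEab) (by exact_mod_cast hEcd)
        (by push_cast; norm_cast; linarith)
      refine Or.inr ⟨hinj ?_, hinj ?_⟩
      · exact_mod_cast this.1
      · exact_mod_cast this.2
  · intro hg
    have hinj : Function.Injective E := by
      intro a b hab
      rcases hg a b b b (by linarith) with ⟨h, -⟩ | ⟨h, -⟩ <;> exact h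
    have hinjC : Function.Injective (fun a : β => (E a : ℂ)) := by
      intro a b hab
      have hab' : ((E a : ℝ) : ℂ) = ((E b : ℝ) : ℂ) := hab
      exact hinj (by exact_mod_cast hab')
    constructor
    · rw [hroots]
      exact Multiset.Nodup.map hinjC univ.nodup
    · rw [hroots]
      intro α hα β' hβ γ hγ δ hδ hne1 hne2 heq
      obtain ⟨a, -, rfl⟩ := Multiset.mem_map.1 hα
      obtain ⟨b, -, rfl⟩ := Multiset.mem_map.1 hβ
      obtain ⟨c, -, rfl⟩ := Multiset.mem_map.1 hγ
      obtain ⟨d, -, rfl⟩ := Multiset.mem_map.1 hδ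
      have hreal : E a - E b - (E c - E d) = 0 := by
        have : ((E a - E b - (E c - E d) : ℝ) : ℂ) = 0 := by push_cast; linear_combination heq
        exact_mod_cast this
      rcases hg a b c d hreal with ⟨rfl, rfl⟩ | ⟨rfl, rfl⟩
      · exact absurd rfl hne1
      · exact ⟨rfl, rfl⟩

lemma coeff_ne_zero_iff_goodE {M U V : Matrix β β ℂ} {E : β → ℝ}
    (hUV : U * V = 1) (hM : M = U * diagonal (fun a => (E a : ℂ)) * V) :
    (G4 M).charpoly.coeff (2 * (Fintype.card β) ^ 2 - Fintype.card β) ≠ 0 ↔ GoodE E := by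
  classical
  set m₀ := 2 * (Fintype.card β) ^ 2 - Fintype.card β with hm₀
  set v : (β × β) × (β × β) → ℂ :=
    fun q => ((E q.1.1 - E q.1.2 - (E q.2.1 - E q.2.2) : ℝ) : ℂ) with hv
  have hcp : (G4 M).charpoly = ∏ q : (β × β) × (β × β), (X - C (v q)) := by
    rw [charpoly_G4 (fun a => (E a : ℂ)) hUV hM]
    refine Finset.prod_congr rfl fun q _ => ?_
    congr 1
    congr 1
    push_cast [hv]
    ring
  set S : Finset ((β × β) × (β × β)) := univ.filter (fun q => v q = 0) with hS
  have hTS : Ttriv β ⊆ S := by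
    intro q hq
    obtain ⟨⟨a, b⟩, c, d⟩ := q
    rw [Ttriv, mem_filter] at hq
    rw [hS, mem_filter]
    refine ⟨mem_univ _, ?_⟩
    rcases hq.2 with ⟨h1, h2⟩ | ⟨h1, h2⟩ <;>
      · simp only at h1 h2
        subst h1; subst h2; simp [hv]
  have hST_iff : (S = Ttriv β) ↔ GoodE E := by
    constructor
    · intro hST a b c d h0
      have hqS : ((a, b), (c, d)) ∈ S := by
        rw [hS, mem_filter]
        refine ⟨mem_univ _, ?_⟩
        show ((E a - E b - (E c - E d) : ℝ) : ℂ) = 0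
        rw [h0, Complex.ofReal_zero]
      rw [hST, Ttriv, mem_filter] at hqS
      exact hqS.2
    · intro hg
      refine Finset.Subset.antisymm ?_ hTS
      intro q hq
      rw [hS, mem_filter] at hq
      have hq2 : ((E q.1.1 - E q.1.2 - (E q.2.1 - E q.2.2) : ℝ) : ℂ) = 0 := hq.2
      have : E q.1.1 - E q.1.2 - (E q.2.1 - E q.2.2) = 0 := by exact_mod_cast hq2
      rw [Ttriv, mem_filter]
      exact ⟨mem_univ _, hg _ _ _ _ this⟩
  -- split the product
  have hsplit : (∏ q : (β × β) × (β × β), (X - C (v q))) =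
      (X : ℂ[X]) ^ S.card * ∏ q ∈ univ.filter (fun q => ¬ v q = 0), (X - C (v q)) := by
    rw [← Finset.prod_filter_mul_prod_filter_not univ (fun q => v q = 0)]
    congr 1
    rw [← hS]
    rw [Finset.prod_congr rfl (fun q hq => ?_), Finset.prod_const]
    rw [hS, mem_filter] at hq
    rw [hq.2, map_zero, sub_zero]
  set g : ℂ[X] := ∏ q ∈ univ.filter (fun q => ¬ v q = 0), (X - C (v q)) with hg
  have hg0 : g.coeff 0 ≠ 0 := by
    rw [Polynomial.coeff_zero_eq_eval_zero, hg, Polynomial.eval_prod]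
    rw [Finset.prod_ne_zero_iff]
    intro q hq
    rw [mem_filter] at hq
    simpa using fun hcon => hq.2 (by simpa using hcon)
  have hcoeff : (G4 M).charpoly.coeff m₀ =
      if S.card ≤ m₀ then g.coeff (m₀ - S.card) else 0 := by
    rw [hcp, hsplit, mul_comm, Polynomial.coeff_mul_X_pow']
  have hzge : m₀ ≤ S.card := by
    rw [hm₀, ← card_Ttriv]
    exact Finset.card_le_card hTS
  constructor
  · intro hne
    rw [hcoeff] at hne
    have hle : S.card ≤ m₀ := by
      by_contra hcon
      rw [if_neg hcon] at hne
      exact hne rfl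
    have hcards : S.card = (Ttriv β).card := by rw [card_Ttriv, ← hm₀]; omega
    exact hST_iff.1 (Finset.eq_of_subset_of_card_le hTS (le_of_eq hcards)).symm
  · intro hgE
    have hST : S = Ttriv β := hST_iff.2 hgE
    have hcards : S.card = m₀ := by rw [hST, card_Ttriv, hm₀]
    rw [hcoeff, if_pos (le_of_eq hcards), hcards, Nat.sub_self]
    exact hg0

end AuxChar

section AuxMeasure


lemma measurable_mvpoly_eval {ι α : Type*} [Fintype ι] [MeasurableSpace α]
    (g : α → ι → ℂ) (hg : ∀ i, Measurable fun x => g x i) (P : MvPolynomial ι ℂ) :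
    Measurable fun x => MvPolynomial.eval (g x) P := by
  induction P using MvPolynomial.induction_on with
  | C a => simpa using measurable_const
  | add p q hp hq => simpa [map_add, Pi.add_def] using hp.add hq
  | mul_X p i hp => simpa [_root_.map_mul, Pi.mul_def] using hp.mul (hg i)

lemma gaussian_pi_fin_null_of_mvpoly (n : ℕ) (P : MvPolynomial (Fin n) ℂ) (hP : P ≠ 0) :
    (Measure.pi fun _ : Fin n => gaussianReal 0 1)
      {x | MvPolynomial.eval (fun i => ((x i : ℝ) : ℂ)) P = 0} = 0 := by
  induction n with
  | zero =>
    obtain ⟨c, rfl⟩ := MvPolynomial.C_surjective (Fin 0) P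
    have hc : c ≠ 0 := fun h => hP (by simp [h])
    have : {x : Fin 0 → ℝ | MvPolynomial.eval (fun i => ((x i : ℝ) : ℂ)) (MvPolynomial.C c) = 0}
        = ∅ := by
      ext x; simp [hc]
    rw [this]; simp
  | succ n ih =>
    set eP : Polynomial (MvPolynomial (Fin n) ℂ) := MvPolynomial.finSuccEquiv ℂ n P with heP
    have heP0 : eP ≠ 0 := by
      simp only [heP, ne_eq, EmbeddingLike.map_eq_zero_iff]
      exact hP
    set S' : Set (ℝ × (Fin n → ℝ)) :=
      {p | MvPolynomial.eval (Fin.cons ((p.1 : ℝ) : ℂ) (fun i => ((p.2 i : ℝ) : ℂ))) P = 0}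
      with hS'
    have hS'meas : MeasurableSet S' := by
      have : Measurable fun p : ℝ × (Fin n → ℝ) =>
          MvPolynomial.eval (Fin.cons ((p.1 : ℝ) : ℂ) (fun i => ((p.2 i : ℝ) : ℂ))) P := by
        apply measurable_mvpoly_eval
        intro i
        refine Fin.cases ?_ ?_ i
        · simpa [Function.comp_def] using Complex.measurable_ofReal.comp measurable_fst
        · intro j
          simpa [Function.comp_def] using Complex.measurable_ofReal.comp ((measurable_pi_apply j).comp measurable_snd)
      exact this (measurableSet_singleton 0)
    have key : ((gaussianReal 0 1).prod (Measure.pi fun _ : Fin n => gaussianReal 0 1)) S' = 0 := by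
      rw [Measure.measure_prod_null hS'meas]
      have hfin : Set.Finite {a : ℝ | Polynomial.eval (MvPolynomial.C ((a : ℝ) : ℂ)) eP = 0} := by
        have h1 : Set.Finite {x : MvPolynomial (Fin n) ℂ | Polynomial.IsRoot eP x} :=
          Polynomial.finite_setOf_isRoot heP0
        refine Set.Finite.subset (Set.Finite.preimage ?_ h1) (fun a ha => ha)
        intro a _ b _ hab
        have := MvPolynomial.C_injective (Fin n) ℂ hab
        exact_mod_cast this
      have hnull : (gaussianReal 0 1)
          {a : ℝ | Polynomial.eval (MvPolynomial.C ((a : ℝ) : ℂ)) eP = 0} = 0 :=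
        (gaussianReal_absolutelyContinuous 0 (by norm_num)) (Set.Finite.measure_zero hfin _)
      have hae : ∀ᵐ a ∂(gaussianReal 0 1),
          Polynomial.eval (MvPolynomial.C ((a : ℝ) : ℂ)) eP ≠ 0 := by
        rw [ae_iff]; simpa using hnull
      refine hae.mono fun a ha => ?_
      have hset : Prod.mk a ⁻¹' S' =
          {y : Fin n → ℝ | MvPolynomial.eval (fun i => ((y i : ℝ) : ℂ))
            (Polynomial.eval (MvPolynomial.C ((a : ℝ) : ℂ)) eP) = 0} := by
        ext y
        have h1 : MvPolynomial.eval (Fin.cons ((a : ℝ) : ℂ) (fun i => ((y i : ℝ) : ℂ))) P =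
            Polynomial.eval ((a : ℝ) : ℂ)
              (Polynomial.map (MvPolynomial.eval fun i => ((y i : ℝ) : ℂ)) eP) :=
          MvPolynomial.eval_eq_eval_mv_eval' _ _ _
        have h2 : MvPolynomial.eval (fun i => ((y i : ℝ) : ℂ))
            (Polynomial.eval (MvPolynomial.C ((a : ℝ) : ℂ)) eP) =
            Polynomial.eval ((a : ℝ) : ℂ)
              (Polynomial.map (MvPolynomial.eval fun i => ((y i : ℝ) : ℂ)) eP) := by
          rw [Polynomial.eval_map, ← Polynomial.eval₂_at_apply]
          simp
        simp only [S', Set.mem_preimage, Set.mem_setOf_eq, h1, h2]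
      show (Measure.pi fun _ : Fin n => gaussianReal 0 1) (Prod.mk a ⁻¹' S') = 0
      rw [hset]
      exact ih _ ha
    have mp := measurePreserving_piFinSuccAbove (fun _ : Fin (n + 1) => gaussianReal 0 1) 0
    have hpre : {x : Fin (n + 1) → ℝ | MvPolynomial.eval (fun i => ((x i : ℝ) : ℂ)) P = 0} =
        (MeasurableEquiv.piFinSuccAbove (fun _ => ℝ) 0) ⁻¹' S' := by
      ext x
      have happ : (MeasurableEquiv.piFinSuccAbove (fun _ : Fin (n+1) => ℝ) 0) x =
          (x 0, fun j => x ((0 : Fin (n+1)).succAbove j)) := rfl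
      simp only [Set.mem_preimage, Set.mem_setOf_eq, S', happ]
      have : (Fin.cons ((x 0 : ℝ) : ℂ)
          (fun i => (((x ((0 : Fin (n+1)).succAbove i) : ℝ)) : ℂ)) : Fin (n+1) → ℂ) =
          fun i => ((x i : ℝ) : ℂ) := by
        funext i
        refine Fin.cases ?_ (fun j => ?_) i
        · simp
        · simp [Fin.zero_succAbove]
      rw [this]
    rw [hpre]
    rw [mp.measure_preimage hS'meas.nullMeasurableSet]
    exact key

lemma gaussian_pi_null_of_mvpoly {ι : Type*} [Fintype ι] (P : MvPolynomial ι ℂ) (hP : P ≠ 0) :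
    (Measure.pi fun _ : ι => gaussianReal 0 1)
      {x | MvPolynomial.eval (fun i => ((x i : ℝ) : ℂ)) P = 0} = 0 := by
  classical
  set f := (Fintype.equivFin ι).symm with hf
  set T := MeasurableEquiv.piCongrLeft (fun _ : ι => ℝ) f with hT
  have mp := measurePreserving_piCongrLeft (fun _ : ι => gaussianReal 0 1) f
  set S : Set (ι → ℝ) := {x | MvPolynomial.eval (fun i => ((x i : ℝ) : ℂ)) P = 0} with hS
  have hSmeas : MeasurableSet S := by
    have : Measurable fun x : ι → ℝ => MvPolynomial.eval (fun i => ((x i : ℝ) : ℂ)) P :=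
      measurable_mvpoly_eval _ (fun i => Complex.measurable_ofReal.comp (measurable_pi_apply i)) _
    exact this (measurableSet_singleton 0)
  have hpre : T ⁻¹' S = {g : Fin (Fintype.card ι) → ℝ |
      MvPolynomial.eval (fun j => ((g j : ℝ) : ℂ)) (MvPolynomial.rename f.symm P) = 0} := by
    ext g
    have hTg : ∀ i, T g i = g (f.symm i) := by
      intro i
      rw [hT]
      show (Equiv.piCongrLeft (fun _ : ι => ℝ) f) g i = g (f.symm i)
      rw [Equiv.piCongrLeft_apply_eq_cast]
      simp
    have harg : (fun i => ((T g i : ℝ) : ℂ)) = (fun j => ((g j : ℝ) : ℂ)) ∘ f.symm := by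
      funext i; simp [hTg i, Function.comp]
    simp only [Set.mem_preimage, Set.mem_setOf_eq, hS, MvPolynomial.eval_rename, harg]
  have : (Measure.pi fun _ : ι => gaussianReal 0 1) S =
      (Measure.pi fun _ : Fin (Fintype.card ι) => gaussianReal 0 1) (T ⁻¹' S) :=
    (mp.measure_preimage hSmeas.nullMeasurableSet).symm
  rw [this, hpre]
  exact gaussian_pi_fin_null_of_mvpoly _ _
    (fun h => hP (by simpa using congrArg (MvPolynomial.rename f) h))

end AuxMeasure

section AuxQuantum



/-- Occupation number of mode `j` in configuration `x`. -/
def occ {N : ℕ} (x : Fin N → Bool) (j : Fin N) : ℝ := if x j then 1 else 0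

lemma numOp_diag (N : ℕ) (j : Fin N) :
    (aOp N j)ᴴ * aOp N j = diagonal (fun x => ((occ x j : ℝ) : ℂ)) := by
  ext x y
  rw [Matrix.mul_apply]
  by_cases hxy : x = y
  · subst hxy
    rw [Matrix.diagonal_apply_eq]
    by_cases hxj : x j = true
    · -- sum over z has single nonzero term z₀ = update x j false
      have hocc : ((occ x j : ℝ) : ℂ) = 1 := by simp [occ, hxj]
      rw [hocc]
      set z₀ := Function.update x j false with hz₀
      rw [Finset.sum_eq_single z₀]
      · -- value at z₀
        have hcond : z₀ j = false ∧ x j = true ∧ ∀ i, i ≠ j → z₀ i = x i :=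
          ⟨Function.update_self j false x, hxj, fun i hi => Function.update_of_ne hi false x⟩
        rw [Matrix.conjTranspose_apply]
        simp only [aOp]
        rw [if_pos hcond]
        set p := ∏ i ∈ Finset.univ.filter (fun i => i < j), (if x i then (-1 : ℂ) else 1) with hp
        have hstar : star p = p := by
          rw [hp, star_prod]
          refine Finset.prod_congr rfl fun i _ => ?_
          split_ifs <;> simp
        rw [hstar]
        rw [hp, ← Finset.prod_mul_distrib]
        rw [Finset.prod_congr rfl (fun i _ => ?_), Finset.prod_const_one]
        split_ifs <;> norm_num
      · intro z _ hz
        rw [Matrix.conjTranspose_apply]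
        simp only [aOp]
        by_cases hc : z j = false ∧ x j = true ∧ ∀ i, i ≠ j → z i = x i
        · exfalso
          apply hz
          funext i
          by_cases hij : i = j
          · subst hij; rw [hz₀, Function.update_self, hc.1]
          · rw [hz₀, Function.update_of_ne hij, hc.2.2 i hij]
        · rw [if_neg hc, star_zero, zero_mul]
      · intro hcon
        exact absurd (Finset.mem_univ z₀) hcon
    · -- x j = false : every term vanishes, diagonal entry is 0
      have hocc : ((occ x j : ℝ) : ℂ) = 0 := by simp [occ, hxj]
      rw [hocc]
      refine Finset.sum_eq_zero fun z _ => ?_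
      rw [Matrix.conjTranspose_apply]
      simp only [aOp]
      rw [if_neg, star_zero, zero_mul]
      rintro ⟨-, hx, -⟩
      exact hxj hx
  · rw [Matrix.diagonal_apply_ne _ hxy]
    refine Finset.sum_eq_zero fun z _ => ?_
    rw [Matrix.conjTranspose_apply]
    by_cases h1 : z j = false ∧ x j = true ∧ ∀ i, i ≠ j → z i = x i
    · by_cases h2 : z j = false ∧ y j = true ∧ ∀ i, i ≠ j → z i = y i
      · exfalso
        apply hxy
        funext i
        by_cases hij : i = j
        · subst hij; rw [h1.2.1, h2.2.1]
        · rw [← h1.2.2 i hij, h2.2.2 i hij]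
      · have : aOp N j z y = 0 := by simp only [aOp]; rw [if_neg h2]
        rw [this, mul_zero]
    · have : aOp N j z x = 0 := by simp only [aOp]; rw [if_neg h1]
      rw [this, star_zero, zero_mul]

lemma Hd_diag (N : ℕ) (K : {pq : Fin N × Fin N // pq.1 ≤ pq.2} → ℝ) :
    Hd N K = diagonal (fun x => ((∑ pq : {pq : Fin N × Fin N // pq.1 ≤ pq.2},
      K pq * (occ x pq.1.1 * occ x pq.1.2) : ℝ) : ℂ)) := by
  rw [Hd]
  have hterm : ∀ pq : {pq : Fin N × Fin N // pq.1 ≤ pq.2},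
      (K pq : ℂ) • ((aOp N pq.1.1)ᴴ * aOp N pq.1.1 * ((aOp N pq.1.2)ᴴ * aOp N pq.1.2)) =
      diagonal (fun x => ((K pq * (occ x pq.1.1 * occ x pq.1.2) : ℝ) : ℂ)) := by
    intro pq
    rw [numOp_diag, numOp_diag, diagonal_mul_diagonal]
    ext x y
    by_cases hxy : x = y
    · subst hxy
      simp only [Matrix.smul_apply, Matrix.diagonal_apply_eq, smul_eq_mul]
      push_cast
      ring
    · simp [Matrix.diagonal_apply_ne _ hxy]
  rw [Finset.sum_congr rfl fun pq _ => hterm pq]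
  ext x y
  rw [Matrix.sum_apply]
  by_cases hxy : x = y
  · subst hxy
    simp only [Matrix.diagonal_apply_eq]
    push_cast
    rfl
  · simp [Matrix.diagonal_apply_ne _ hxy]

lemma Hd_smul (N : ℕ) (c : ℝ) (K : {pq : Fin N × Fin N // pq.1 ≤ pq.2} → ℝ) :
    Hd N (c • K) = (c : ℂ) • Hd N K := by
  rw [Hd, Hd, Finset.smul_sum]
  refine Finset.sum_congr rfl fun pq _ => ?_
  rw [smul_smul]
  congr 1
  push_cast [Pi.smul_apply, smul_eq_mul]
  ring

lemma isHermitian_HSYK2 (N : ℕ) (h : Matrix (Fin N) (Fin N) ℂ) (hh : h.IsHermitian) :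
    (HSYK2 N h).IsHermitian := by
  show (HSYK2 N h)ᴴ = HSYK2 N h
  rw [HSYK2, Matrix.conjTranspose_sum]
  rw [Finset.sum_congr rfl fun j _ => Matrix.conjTranspose_sum _ _]
  have hterm : ∀ j k, (h j k • ((aOp N j)ᴴ * aOp N k))ᴴ = star (h j k) • ((aOp N k)ᴴ * aOp N j) := by
    intro j k
    rw [Matrix.conjTranspose_smul, Matrix.conjTranspose_mul, Matrix.conjTranspose_conjTranspose]
  rw [Finset.sum_congr rfl fun j _ => Finset.sum_congr rfl fun k _ => hterm j k]
  rw [Finset.sum_comm]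
  refine Finset.sum_congr rfl fun j _ => Finset.sum_congr rfl fun k _ => ?_
  congr 1
  have := congrFun (congrFun hh j) k
  rw [Matrix.conjTranspose_apply] at this
  exact this

lemma isHermitian_M (N : ℕ) (h : Matrix (Fin N) (Fin N) ℂ) (hh : h.IsHermitian) (ε₂ : ℝ)
    (K : {pq : Fin N × Fin N // pq.1 ≤ pq.2} → ℝ) :
    (HSYK2 N h + (ε₂ : ℂ) • Hd N K).IsHermitian := by
  refine Matrix.IsHermitian.add (isHermitian_HSYK2 N h hh) ?_
  show ((ε₂ : ℂ) • Hd N K)ᴴ = _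
  rw [Matrix.conjTranspose_smul, Hd_diag, Matrix.diagonal_conjTranspose]
  have h1 : star ((ε₂ : ℝ) : ℂ) = ((ε₂ : ℝ) : ℂ) := by
    simp [Complex.star_def, Complex.conj_ofReal]
  have h2 : star (fun x : Fin N → Bool => ((∑ pq : {pq : Fin N × Fin N // pq.1 ≤ pq.2},
      K pq * (occ x pq.1.1 * occ x pq.1.2) : ℝ) : ℂ)) =
      fun x : Fin N → Bool => ((∑ pq : {pq : Fin N × Fin N // pq.1 ≤ pq.2},
      K pq * (occ x pq.1.1 * occ x pq.1.2) : ℝ) : ℂ) := by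
    funext x
    simp [Pi.star_apply, Complex.star_def, Complex.conj_ofReal]
  rw [h1, h2, ← Hd_diag]

end AuxQuantum

section AuxWitness


/-- Natural occupation number. -/
def nocc {N : ℕ} (x : Fin N → Bool) (j : Fin N) : ℕ := if x j then 1 else 0

lemma digits5_unique (L : ℕ) (t u : ℕ → ℕ) (ht : ∀ m, t m < 5) (hu : ∀ m, u m < 5)
    (h : ∑ m ∈ Finset.range L, 5 ^ m * t m = ∑ m ∈ Finset.range L, 5 ^ m * u m) :
    ∀ m < L, t m = u m := by
  induction L generalizing t u with
  | zero => intro m hm; omega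
  | succ L ih =>
    have hsplit : ∀ w : ℕ → ℕ, ∑ m ∈ Finset.range (L + 1), 5 ^ m * w m =
        w 0 + 5 * ∑ m ∈ Finset.range L, 5 ^ m * w (m + 1) := by
      intro w
      rw [Finset.sum_range_succ']
      have : ∑ m ∈ Finset.range L, 5 ^ (m + 1) * w (m + 1) =
          5 * ∑ m ∈ Finset.range L, 5 ^ m * w (m + 1) := by
        rw [Finset.mul_sum]
        exact Finset.sum_congr rfl fun m _ => by ring
      rw [this, pow_zero, one_mul]
      ring
    rw [hsplit t, hsplit u] at h
    have h0 : t 0 = u 0 := by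
      have e1 : (t 0 + 5 * ∑ m ∈ Finset.range L, 5 ^ m * t (m + 1)) % 5 = t 0 :=
        by rw [Nat.add_mul_mod_self_left]; exact Nat.mod_eq_of_lt (ht 0)
      have e2 : (u 0 + 5 * ∑ m ∈ Finset.range L, 5 ^ m * u (m + 1)) % 5 = u 0 :=
        by rw [Nat.add_mul_mod_self_left]; exact Nat.mod_eq_of_lt (hu 0)
      rw [← e1, ← e2, h]
    have hrest : ∑ m ∈ Finset.range L, 5 ^ m * t (m + 1) =
        ∑ m ∈ Finset.range L, 5 ^ m * u (m + 1) := by omega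
    intro m hm
    cases m with
    | zero => exact h0
    | succ k =>
      exact ih (fun m => t (m + 1)) (fun m => u (m + 1)) (fun m => ht _) (fun m => hu _)
        hrest k (by omega)

/-- Sparse-exponent version over a finite index type. -/
lemma sparse_digits5_unique {ι : Type*} [Fintype ι] (e : ι → ℕ) (he : Function.Injective e)
    (L : ℕ) (hL : ∀ i, e i < L) (w w' : ι → ℕ) (hw : ∀ i, w i < 5) (hw' : ∀ i, w' i < 5)
    (h : ∑ i, 5 ^ (e i) * w i = ∑ i, 5 ^ (e i) * w' i) : ∀ i, w i = w' i := by
  classical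
  set t : ℕ → ℕ := fun m => ∑ i ∈ univ.filter (fun i => e i = m), w i with hts
  set u : ℕ → ℕ := fun m => ∑ i ∈ univ.filter (fun i => e i = m), w' i with hus
  have hfiber : ∀ (v : ι → ℕ) (m : ℕ), ∑ i ∈ univ.filter (fun i => e i = m), 5 ^ (e i) * v i
      = 5 ^ m * ∑ i ∈ univ.filter (fun i => e i = m), v i := by
    intro v m
    rw [Finset.mul_sum]
    refine Finset.sum_congr rfl fun i hi => ?_
    rw [(Finset.mem_filter.1 hi).2]
  have hsum : ∀ (v : ι → ℕ), ∑ i, 5 ^ (e i) * v i =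
      ∑ m ∈ Finset.range L, 5 ^ m * ∑ i ∈ univ.filter (fun i => e i = m), v i := by
    intro v
    rw [Finset.sum_congr rfl fun m _ => (hfiber v m).symm]
    rw [← Finset.sum_fiberwise_of_maps_to (fun i _ => Finset.mem_range.2 (hL i))]
  have hsmall : ∀ (v : ι → ℕ), (∀ i, v i < 5) → ∀ m, (∑ i ∈ univ.filter (fun i => e i = m), v i) < 5 := by
    intro v hv m
    rcases Finset.eq_empty_or_nonempty (univ.filter (fun i => e i = m)) with he' | ⟨i, hi⟩
    · rw [he']; simp
    · have : univ.filter (fun i => e i = m) = {i} := by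
        refine Finset.eq_singleton_iff_unique_mem.2 ⟨hi, fun j hj => ?_⟩
        exact he ((Finset.mem_filter.1 hj).2.trans (Finset.mem_filter.1 hi).2.symm)
      rw [this, Finset.sum_singleton]
      exact hv i
  have := digits5_unique L t u (hsmall w hw) (hsmall w' hw') (by rw [hts, hus]; rw [← hsum w, ← hsum w']; exact h)
  intro i
  have hi := this (e i) (hL i)
  have hfil : univ.filter (fun j => e j = e i) = {i} := by
    refine Finset.eq_singleton_iff_unique_mem.2 ⟨by simp, fun j hj => he (Finset.mem_filter.1 hj).2⟩
  rw [hts, hus] at hi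
  simp only [hfil, Finset.sum_singleton] at hi
  exact hi

/-- The key combinatorial property of the witness couplings. -/
lemma witness_pair_property {N : ℕ} (a b c d : Fin N → Bool)
    (Hpair : ∀ j k : Fin N, j ≤ k →
      nocc a j * nocc a k + nocc d j * nocc d k = nocc b j * nocc b k + nocc c j * nocc c k) :
    (a = b ∧ c = d) ∨ (a = c ∧ b = d) := by
  have Hpair' : ∀ j k : Fin N,
      nocc a j * nocc a k + nocc d j * nocc d k = nocc b j * nocc b k + nocc c j * nocc c k := by
    intro j k
    rcases le_total j k with hjk | hjk
    · exact Hpair j k hjk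
    · have := Hpair k j hjk
      simpa [Nat.mul_comm] using this
  have hdiag : ∀ j, nocc a j + nocc d j = nocc b j + nocc c j := by
    intro j
    have := Hpair' j j
    have hsq : ∀ x : Fin N → Bool, nocc x j * nocc x j = nocc x j := by
      intro x; unfold nocc; split_ifs <;> simp
    rwa [hsq a, hsq b, hsq c, hsq d] at this
  by_cases hab : a = b
  · subst hab
    refine Or.inl ⟨rfl, funext fun j => ?_⟩
    have := hdiag j
    unfold nocc at this
    cases hc : c j <;> cases hd : d j <;> simp_all
  · refine Or.inr ?_
    obtain ⟨j₀, hj₀⟩ := Function.ne_iff.1 hab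
    have hj : c j₀ = a j₀ ∧ d j₀ = b j₀ := by
      have := hdiag j₀
      unfold nocc at this
      cases ha : a j₀ <;> cases hb : b j₀ <;> cases hc : c j₀ <;> cases hd : d j₀ <;>
        simp_all
    have key : ∀ k, a k = c k ∧ b k = d k := by
      intro k
      have h1 := Hpair' j₀ k
      have h2 := hdiag k
      rw [show nocc c j₀ = nocc a j₀ from by rw [nocc, nocc, hj.1],
        show nocc d j₀ = nocc b j₀ from by rw [nocc, nocc, hj.2]] at h1
      unfold nocc at h1 h2
      cases ha : a j₀ <;> cases hb : b j₀ <;>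
        cases hak : a k <;> cases hbk : b k <;> cases hck : c k <;> cases hdk : d k <;>
        simp_all
    exact ⟨funext fun k => (key k).1, funext fun k => (key k).2⟩

end AuxWitness


section AuxGlue
open Polynomial in
/-- Hermiticity of `s • H_SYK2 + ε₂ • H_d`. -/
lemma isHermitian_sM (N : ℕ) (h : Matrix (Fin N) (Fin N) ℂ) (hh : h.IsHermitian) (s ε₂ : ℝ)
    (K : {pq : Fin N × Fin N // pq.1 ≤ pq.2} → ℝ) :
    (((s : ℝ) : ℂ) • HSYK2 N h + ((ε₂ : ℝ) : ℂ) • Hd N K).IsHermitian := by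
  have h1 : (((s : ℝ) : ℂ) • HSYK2 N h).IsHermitian := by
    show (((s : ℝ) : ℂ) • HSYK2 N h)ᴴ = _
    rw [Matrix.conjTranspose_smul, isHermitian_HSYK2 N h hh]
    congr 1
    simp [Complex.star_def, Complex.conj_ofReal]
  have h2 := isHermitian_M N h hh ε₂ K
  have h3 : ((ε₂ : ℂ) • Hd N K).IsHermitian := by
    have h4 := isHermitian_HSYK2 N h hh
    have := h2
    rw [Matrix.IsHermitian] at this h4 ⊢
    rw [Matrix.conjTranspose_add, h4] at this
    exact add_left_cancel this
  exact h1.add h3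

lemma occ_eq_nocc {N : ℕ} (x : Fin N → Bool) (j : Fin N) : occ x j = (nocc x j : ℕ) := by
  rw [occ, nocc]; split_ifs <;> simp

/-- Exponents for the witness couplings. -/
def eIdx {N : ℕ} (pq : {pq : Fin N × Fin N // pq.1 ≤ pq.2}) : ℕ :=
  pq.1.2.val + N * pq.1.1.val

lemma eIdx_lt {N : ℕ} (pq : {pq : Fin N × Fin N // pq.1 ≤ pq.2}) : eIdx pq < N * N := by
  have h1 : pq.1.2.val < N := pq.1.2.isLt
  have h2 : pq.1.1.val + 1 ≤ N := pq.1.1.isLt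
  calc eIdx pq < N + N * pq.1.1.val := by rw [eIdx]; omega
    _ = N * (pq.1.1.val + 1) := by ring
    _ ≤ N * N := Nat.mul_le_mul_left N h2

lemma eIdx_inj {N : ℕ} : Function.Injective (eIdx (N := N)) := by
  rintro ⟨⟨j, k⟩, hle⟩ ⟨⟨j', k'⟩, hle'⟩ hpq
  have hN : 0 < N := j.pos
  rw [eIdx, eIdx] at hpq
  simp only at hpq
  have hdiv : ∀ (a : Fin N) (b : Fin N), (a.val + N * b.val) / N = b.val := by
    intro a b
    rw [Nat.add_mul_div_left _ _ hN, Nat.div_eq_of_lt a.isLt, zero_add]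
  have hmod : ∀ (a : Fin N) (b : Fin N), (a.val + N * b.val) % N = a.val := by
    intro a b
    rw [Nat.add_mul_mod_self_left, Nat.mod_eq_of_lt a.isLt]
  have e1 : j.val = j'.val := by rw [← hdiv k j, ← hdiv k' j', hpq]
  have e2 : k.val = k'.val := by rw [← hmod k j, ← hmod k' j', hpq]
  apply Subtype.ext
  simp only [Prod.ext_iff]
  exact ⟨Fin.ext e1, Fin.ext e2⟩

/-- The witness couplings. -/
def Kwit (N : ℕ) : {pq : Fin N × Fin N // pq.1 ≤ pq.2} → ℝ := fun pq => (5 : ℝ) ^ (eIdx pq)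

lemma nocc_le_one {N : ℕ} (x : Fin N → Bool) (j : Fin N) : nocc x j ≤ 1 := by
  rw [nocc]; split_ifs <;> omega

/-- Natural-number version of the diagonal values. -/
def Fnat {N : ℕ} (x : Fin N → Bool) : ℕ :=
  ∑ pq : {pq : Fin N × Fin N // pq.1 ≤ pq.2}, 5 ^ (eIdx pq) * (nocc x pq.1.1 * nocc x pq.1.2)

lemma Fr_eq_Fnat {N : ℕ} (x : Fin N → Bool) :
    ∑ pq : {pq : Fin N × Fin N // pq.1 ≤ pq.2}, Kwit N pq * (occ x pq.1.1 * occ x pq.1.2)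
      = ((Fnat x : ℕ) : ℝ) := by
  rw [Fnat]
  push_cast
  refine Finset.sum_congr rfl fun pq _ => ?_
  rw [Kwit, occ_eq_nocc, occ_eq_nocc]

lemma goodE_witness (N : ℕ) (ε₂ : ℝ) (hε : ε₂ ≠ 0) :
    GoodE (fun x : Fin N → Bool => ε₂ * ∑ pq : {pq : Fin N × Fin N // pq.1 ≤ pq.2},
      Kwit N pq * (occ x pq.1.1 * occ x pq.1.2)) := by
  intro a b c d h0
  simp only [Fr_eq_Fnat] at h0
  have h1 : ((Fnat a : ℕ) : ℝ) + (Fnat d : ℕ) = ((Fnat b : ℕ) : ℝ) + (Fnat c : ℕ) := by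
    rcases mul_eq_zero.1 (show ε₂ * (((Fnat a : ℕ) : ℝ) + (Fnat d : ℕ)
        - (((Fnat b : ℕ) : ℝ) + (Fnat c : ℕ))) = 0 by linear_combination h0) with hc | hc
    · exact absurd hc hε
    · linarith
  have h2 : Fnat a + Fnat d = Fnat b + Fnat c := by exact_mod_cast h1
  have h3 : ∑ pq : {pq : Fin N × Fin N // pq.1 ≤ pq.2},
      5 ^ (eIdx pq) * (nocc a pq.1.1 * nocc a pq.1.2 + nocc d pq.1.1 * nocc d pq.1.2) =
      ∑ pq : {pq : Fin N × Fin N // pq.1 ≤ pq.2},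
      5 ^ (eIdx pq) * (nocc b pq.1.1 * nocc b pq.1.2 + nocc c pq.1.1 * nocc c pq.1.2) := by
    simp only [Nat.mul_add, Finset.sum_add_distrib]
    exact h2
  have hb : ∀ (x : Fin N → Bool) (pq : {pq : Fin N × Fin N // pq.1 ≤ pq.2})
      (y : Fin N → Bool),
      nocc x pq.1.1 * nocc x pq.1.2 + nocc y pq.1.1 * nocc y pq.1.2 < 5 := by
    intro x pq y
    have := Nat.mul_le_mul (nocc_le_one x pq.1.1) (nocc_le_one x pq.1.2)
    have := Nat.mul_le_mul (nocc_le_one y pq.1.1) (nocc_le_one y pq.1.2)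
    omega
  have h4 := sparse_digits5_unique eIdx eIdx_inj (N * N) eIdx_lt _ _
    (fun pq => hb a pq d) (fun pq => hb b pq c) h3
  have Hpair : ∀ j k : Fin N, j ≤ k →
      nocc a j * nocc a k + nocc d j * nocc d k = nocc b j * nocc b k + nocc c j * nocc c k :=
    fun j k hjk => h4 ⟨(j, k), hjk⟩
  exact witness_pair_property a b c d Hpair

end AuxGlue

/-- For fixed Hermitian `h` and `ε₂ ≠ 0`, for almost every Gaussian `K`
the spectrum of `H_SYK2 + ε₂ H_d` has non-degenerate gaps. -/
theorem syk2_plus_density_nondegenerate_gaps (N : ℕ)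
    (h : Matrix (Fin N) (Fin N) ℂ) (hh : h.IsHermitian) (ε₂ : ℝ) (hε : ε₂ ≠ 0) :
    ∀ᵐ K ∂(Measure.pi fun _ : {pq : Fin N × Fin N // pq.1 ≤ pq.2} => gaussianReal 0 1),
      NondegGaps (HSYK2 N h + (ε₂ : ℂ) • Hd N K) := by
  classical
  set m₀ := 2 * (Fintype.card (Fin N → Bool)) ^ 2 - Fintype.card (Fin N → Bool) with hm₀def
  -- the multivariate polynomial detecting non-degenerate gaps
  set numop : {pq : Fin N × Fin N // pq.1 ≤ pq.2} → QOp N := fun pq =>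
    (aOp N pq.1.1)ᴴ * aOp N pq.1.1 * ((aOp N pq.1.2)ᴴ * aOp N pq.1.2) with hnumop
  set Pmat : Matrix (Fin N → Bool) (Fin N → Bool)
      (MvPolynomial {pq : Fin N × Fin N // pq.1 ≤ pq.2} ℂ) :=
    (HSYK2 N h).map MvPolynomial.C +
      ∑ pq : {pq : Fin N × Fin N // pq.1 ≤ pq.2},
        (MvPolynomial.C ((ε₂ : ℝ) : ℂ) * MvPolynomial.X pq) • (numop pq).map MvPolynomial.C
    with hPmat
  have hmapK : ∀ K : {pq : Fin N × Fin N // pq.1 ≤ pq.2} → ℝ,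
      Pmat.map (MvPolynomial.eval (fun i => ((K i : ℝ) : ℂ))) =
        HSYK2 N h + (ε₂ : ℂ) • Hd N K := by
    intro K
    ext x y
    simp only [hPmat, hnumop, Matrix.map_apply, Matrix.add_apply, Matrix.sum_apply,
      Matrix.smul_apply, map_add, map_sum, _root_.map_mul, MvPolynomial.eval_C,
      MvPolynomial.eval_X, smul_eq_mul, Hd]
    rw [Finset.mul_sum]
    congr 1
    refine Finset.sum_congr rfl fun pq _ => by ring
  set P : MvPolynomial {pq : Fin N × Fin N // pq.1 ≤ pq.2} ℂ :=
    (G4 Pmat).charpoly.coeff m₀ with hP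
  have hPeval : ∀ K : {pq : Fin N × Fin N // pq.1 ≤ pq.2} → ℝ,
      MvPolynomial.eval (fun i => ((K i : ℝ) : ℂ)) P =
        (G4 (HSYK2 N h + (ε₂ : ℂ) • Hd N K)).charpoly.coeff m₀ := by
    intro K
    rw [← hmapK K, ← G4_map Pmat (MvPolynomial.eval (fun i => ((K i : ℝ) : ℂ))),
      Matrix.charpoly_map, Polynomial.coeff_map, hP]
  -- the one-parameter family over ℂ[t] used for the witness
  set Msm : Matrix (Fin N → Bool) (Fin N → Bool) (Polynomial ℂ) :=
    (Polynomial.X : Polynomial ℂ) • (HSYK2 N h).map Polynomial.C +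
      (((ε₂ : ℝ) : ℂ) • Hd N (Kwit N)).map Polynomial.C with hMsm
  have hmaps : ∀ s : ℂ, Msm.map (Polynomial.evalRingHom s) =
      s • HSYK2 N h + (ε₂ : ℂ) • Hd N (Kwit N) := by
    intro s
    ext x y
    simp only [hMsm, Matrix.map_apply, Matrix.add_apply, Matrix.smul_apply,
      Polynomial.coe_evalRingHom, Polynomial.eval_add, Polynomial.eval_mul, Polynomial.eval_smul,
      Polynomial.eval_X, Polynomial.eval_C, smul_eq_mul, map_add, _root_.map_mul]
  set qp : Polynomial ℂ := (G4 Msm).charpoly.coeff m₀ with hqp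
  have hqeval : ∀ s : ℂ, qp.eval s =
      (G4 (s • HSYK2 N h + (ε₂ : ℂ) • Hd N (Kwit N))).charpoly.coeff m₀ := by
    intro s
    rw [← hmaps s, ← G4_map Msm (Polynomial.evalRingHom s), Matrix.charpoly_map,
      Polynomial.coeff_map, hqp, Polynomial.coe_evalRingHom]
  -- at `s = 0` the family is diagonal with good eigenvalues
  have hdiag0 : (0 : ℂ) • HSYK2 N h + (ε₂ : ℂ) • Hd N (Kwit N) =
      1 * diagonal (fun x : Fin N → Bool =>
        (((ε₂ * ∑ pq : {pq : Fin N × Fin N // pq.1 ≤ pq.2},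
          Kwit N pq * (occ x pq.1.1 * occ x pq.1.2) : ℝ)) : ℂ)) * 1 := by
    rw [zero_smul, zero_add, Matrix.one_mul, Matrix.mul_one, Hd_diag]
    ext x y
    by_cases hxy : x = y
    · subst hxy
      simp only [Matrix.smul_apply, Matrix.diagonal_apply_eq, smul_eq_mul]
      push_cast
      ring
    · simp [Matrix.diagonal_apply_ne _ hxy]
  have h11 : (1 : Matrix (Fin N → Bool) (Fin N → Bool) ℂ) * 1 = 1 := Matrix.one_mul 1
  have hq0 : qp.eval 0 ≠ 0 := by
    rw [hqeval 0]
    exact (coeff_ne_zero_iff_goodE h11 hdiag0).2 (goodE_witness N ε₂ hε)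
  have hqp0 : qp ≠ 0 := fun hc => hq0 (by rw [hc, Polynomial.eval_zero])
  -- pick a real `s ≠ 0` avoiding the roots
  have hbad : ({x : ℝ | qp.eval ((x : ℝ) : ℂ) = 0} ∪ {0}).Finite := by
    refine Set.Finite.union ?_ (Set.finite_singleton 0)
    refine Set.Finite.subset (Set.Finite.preimage ?_ (Polynomial.finite_setOf_isRoot hqp0))
      (fun x hx => hx)
    intro x _ y _ hxy
    exact_mod_cast hxy
  obtain ⟨s, hs⟩ := (Set.Finite.infinite_compl hbad).nonempty
  simp only [Set.mem_compl_iff, Set.mem_union, Set.mem_setOf_eq, Set.mem_singleton_iff,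
    not_or] at hs
  obtain ⟨hseval, hs0⟩ := hs
  -- the Hermitian matrix at parameter `s`
  have hherm_s := isHermitian_sM N h hh s ε₂ (Kwit N)
  have hUVs : (hherm_s.eigenvectorUnitary : Matrix (Fin N → Bool) (Fin N → Bool) ℂ) *
      star (hherm_s.eigenvectorUnitary : Matrix (Fin N → Bool) (Fin N → Bool) ℂ) = 1 :=
    (Matrix.mem_unitaryGroup_iff).mp hherm_s.eigenvectorUnitary.2
  have hMs : ((s : ℝ) : ℂ) • HSYK2 N h + (ε₂ : ℂ) • Hd N (Kwit N) =
      (hherm_s.eigenvectorUnitary : Matrix (Fin N → Bool) (Fin N → Bool) ℂ) *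
        diagonal (fun a => ((hherm_s.eigenvalues a : ℝ) : ℂ)) *
        star (hherm_s.eigenvectorUnitary : Matrix (Fin N → Bool) (Fin N → Bool) ℂ) := by
    have := hherm_s.spectral_theorem
    rw [Unitary.conjStarAlgAut_apply] at this
    convert this using 3
    all_goals rfl
  have hgood_s : GoodE hherm_s.eigenvalues := by
    refine (coeff_ne_zero_iff_goodE hUVs hMs).1 ?_
    rw [← hqeval ((s : ℝ) : ℂ)]
    exact hseval
  -- rescale to land back in the original family
  have hssc : ((s⁻¹ : ℝ) : ℂ) * ((s : ℝ) : ℂ) = 1 := by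
    push_cast
    field_simp
  have hMKw : HSYK2 N h + (ε₂ : ℂ) • Hd N (s⁻¹ • Kwit N) =
      (hherm_s.eigenvectorUnitary : Matrix (Fin N → Bool) (Fin N → Bool) ℂ) *
        diagonal (fun a => ((s⁻¹ * hherm_s.eigenvalues a : ℝ) : ℂ)) *
        star (hherm_s.eigenvectorUnitary : Matrix (Fin N → Bool) (Fin N → Bool) ℂ) := by
    have hstep : HSYK2 N h + (ε₂ : ℂ) • Hd N (s⁻¹ • Kwit N) =
        ((s⁻¹ : ℝ) : ℂ) • (((s : ℝ) : ℂ) • HSYK2 N h + (ε₂ : ℂ) • Hd N (Kwit N)) := by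
      rw [Hd_smul, smul_add, smul_smul, smul_smul, hssc, one_smul, smul_smul, mul_comm]
    have hstep2 := congrArg (fun M => ((s⁻¹ : ℝ) : ℂ) • M) hMs
    rw [hstep, hstep2, ← Matrix.smul_mul, ← Matrix.mul_smul]
    congr 1
    congr 1
    ext x y
    by_cases hxy : x = y
    · subst hxy
      simp only [Matrix.smul_apply, Matrix.diagonal_apply_eq, smul_eq_mul]
      push_cast
      ring
    · simp [Matrix.diagonal_apply_ne _ hxy]
  have hgoodKw : GoodE (fun a => s⁻¹ * hherm_s.eigenvalues a) := by
    intro a b c d h0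
    refine hgood_s a b c d ?_
    have hfac : s⁻¹ * (hherm_s.eigenvalues a - hherm_s.eigenvalues b -
        (hherm_s.eigenvalues c - hherm_s.eigenvalues d)) = 0 := by linear_combination h0
    rcases mul_eq_zero.1 hfac with hc | hc
    · exact absurd hc (inv_ne_zero hs0)
    · exact hc
  have hcoeffKw : (G4 (HSYK2 N h + (ε₂ : ℂ) • Hd N (s⁻¹ • Kwit N))).charpoly.coeff m₀ ≠ 0 :=
    (coeff_ne_zero_iff_goodE hUVs hMKw).2 hgoodKw
  have hP0 : P ≠ 0 := by
    intro hc
    apply hcoeffKw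
    rw [← hPeval (s⁻¹ • Kwit N), hc, map_zero]
  -- conclude by the measure-zero lemma
  have hnull := gaussian_pi_null_of_mvpoly P hP0
  rw [MeasureTheory.ae_iff]
  refine measure_mono_null ?_ hnull
  intro K hK
  simp only [Set.mem_setOf_eq] at hK ⊢
  by_contra heval
  apply hK
  have hherm := isHermitian_sM N h hh 1 ε₂ K
  rw [Complex.ofReal_one, one_smul] at hherm
  have hUV : (hherm.eigenvectorUnitary : Matrix (Fin N → Bool) (Fin N → Bool) ℂ) *
      star (hherm.eigenvectorUnitary : Matrix (Fin N → Bool) (Fin N → Bool) ℂ) = 1 :=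
    (Matrix.mem_unitaryGroup_iff).mp hherm.eigenvectorUnitary.2
  have hM : HSYK2 N h + (ε₂ : ℂ) • Hd N K =
      (hherm.eigenvectorUnitary : Matrix (Fin N → Bool) (Fin N → Bool) ℂ) *
        diagonal (fun a => ((hherm.eigenvalues a : ℝ) : ℂ)) *
        star (hherm.eigenvectorUnitary : Matrix (Fin N → Bool) (Fin N → Bool) ℂ) := by
    have := hherm.spectral_theorem
    rw [Unitary.conjStarAlgAut_apply] at this
    convert this using 3
    all_goals rfl
  have hcoeff : (G4 (HSYK2 N h + (ε₂ : ℂ) • Hd N K)).charpoly.coeff m₀ ≠ 0 := by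
    rw [← hPeval K]
    exact heval
  exact (nondegGaps_iff_goodE hUV hM).2 ((coeff_ne_zero_iff_goodE hUV hM).1 hcoeff)


end
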